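/- Suppose differentiable functions x, y, z, a, b : ℝ → ℝ satisfy x' = -xz, y' = αyz, z' = x² - αy², a' = 2x + az, b' = 2y - αbz with z(0) = a(0) = b(0) = 0. Then a(t)x(t) - αb(t)y(t) = 2z(t) for all t. -/

import Mathlib

/-- If `x' = -xz`, `y' = αyz`, `z' = x² - αy²`, `a' = 2x + az`, `b' = 2y - αbz`
with `z(0) = a(0) = b(0) = 0`, then `a(t)x(t) - αb(t)y(t) = 2z(t)` for all `t`. -/
theorem holonomy_identity (α : ℝ) (x y z a b : ℝ → ℝ)
    (hx : ∀ t, HasDerivAt x (-(x t) * z t) t)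
    (hy : ∀ t, HasDerivAt y (α * y t * z t) t)
    (hz : ∀ t, HasDerivAt z ((x t) ^ 2 - α * (y t) ^ 2) t)
    (ha : ∀ t, HasDerivAt a (2 * x t + a t * z t) t)
    (hb : ∀ t, HasDerivAt b (2 * y t - α * b t * z t) t)
    (hz0 : z 0 = 0) (ha0 : a 0 = 0) (hb0 : b 0 = 0) :
    ∀ t, a t * x t - α * b t * y t = 2 * z t := by
  set F : ℝ → ℝ := fun t => a t * x t - α * b t * y t - 2 * z t with hF
  have hF' : ∀ t, HasDerivAt F 0 t := by
    intro t
    have h := (((ha t).mul (hx t)).sub ((((hasDerivAt_const t α).mul (hb t)).mul (hy t)))).sub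
      ((hasDerivAt_const t (2:ℝ)).mul (hz t))
    convert h using 1
    · rfl
    · rfl
    · rfl
    · simp only [Pi.mul_apply]
      ring
  have hconst : ∀ t, F t = F 0 := by
    intro t
    have : ∀ s, deriv F s = 0 := fun s => (hF' s).deriv
    exact is_const_of_deriv_eq_zero (fun s => (hF' s).differentiableAt) this t 0
  intro t
  have := hconst t
  simp only [hF, hz0, ha0, hb0] at this
  linarith
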